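/- Let λ > 0 and A₀ ∈ S⁺⁺(ℝ^{d×d}). If M(s) is symmetric positive semidefinite for all s, then the solution A(t) = e^{(t₀−t)/λ} A₀ + ∫_{t₀}^t λ⁻¹ e^{(s−t)/λ} M(s) ds of the relaxation ODE remains symmetric positive definite for all t ≥ t₀. -/

import Mathlib

open Matrix

attribute [local instance] Matrix.normedAddCommGroup Matrix.normedSpace

/-- Transpose as a continuous linear map on real matrices. -/
noncomputable def transposeCLM (d : ℕ) :
    Matrix (Fin d) (Fin d) ℝ →L[ℝ] Matrix (Fin d) (Fin d) ℝ :=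
  { toLinearMap := (Matrix.transposeLinearEquiv (Fin d) (Fin d) ℝ ℝ).toLinearMap
    cont := continuous_id.matrix_transpose }

/-- Quadratic form evaluation `A ↦ x ⬝ᵥ A *ᵥ x` as a continuous linear map. -/
noncomputable def quadCLM (d : ℕ) (x : Fin d → ℝ) :
    Matrix (Fin d) (Fin d) ℝ →L[ℝ] ℝ :=
  { toFun := fun A => x ⬝ᵥ A.mulVec x
    map_add' := by intro A B; simp [Matrix.add_mulVec, dotProduct_add]
    map_smul' := by intro c A; simp [Matrix.smul_mulVec, dotProduct_smul]
    cont := continuous_const.dotProduct (continuous_id.matrix_mulVec continuous_const) }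

lemma posSemidef_smul {d : ℕ} {A : Matrix (Fin d) (Fin d) ℝ} (hA : A.PosSemidef)
    {c : ℝ} (hc : 0 ≤ c) : (c • A).PosSemidef := by
  rw [Matrix.posSemidef_iff_dotProduct_mulVec] at hA ⊢
  constructor
  · rw [Matrix.IsHermitian, Matrix.conjTranspose_smul, star_trivial, hA.1]
  · intro x
    have := hA.2 x
    simp only [Matrix.smul_mulVec, dotProduct_smul, smul_eq_mul, star_trivial] at *
    positivity

lemma integral_posSemidef {d : ℕ} (f : ℝ → Matrix (Fin d) (Fin d) ℝ)
    (hf : Continuous f) (hpsd : ∀ s, (f s).PosSemidef) {a b : ℝ} (hab : a ≤ b) :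
    (∫ s in a..b, f s).PosSemidef := by
  have hint := hf.intervalIntegrable (μ := MeasureTheory.volume) a b
  rw [Matrix.posSemidef_iff_dotProduct_mulVec]
  constructor
  · -- Hermitian
    have := (transposeCLM d).intervalIntegral_comp_comm hint
    unfold Matrix.IsHermitian
    rw [Matrix.conjTranspose_eq_transpose_of_trivial]
    have h2 : (∫ s in a..b, f s)ᵀ = ∫ s in a..b, (f s)ᵀ := by
      exact this.symm
    rw [h2]
    apply intervalIntegral.integral_congr
    intro s _
    have := (hpsd s).1
    rwa [Matrix.IsHermitian, Matrix.conjTranspose_eq_transpose_of_trivial] at this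
  · intro x
    have := (quadCLM d x).intervalIntegral_comp_comm hint
    have h2 : x ⬝ᵥ (∫ s in a..b, f s).mulVec x = ∫ s in a..b, x ⬝ᵥ (f s).mulVec x := by
      exact this.symm
    simp only [star_trivial]
    rw [h2]
    apply intervalIntegral.integral_nonneg hab
    intro s _
    simpa using (hpsd s).dotProduct_mulVec_nonneg x

/-- Positivity preservation: if `A₀` is symmetric positive definite, `lam > 0`, and
`M` is continuous with symmetric positive semidefinite values, then
`A t = e^{(t₀−t)/lam} A₀ + ∫_{t₀}^t lam⁻¹ e^{(s−t)/lam} M s ds` is symmetric positive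
definite for all `t ≥ t₀`. -/
theorem stmt_10 {d : ℕ} (lam : ℝ) (hlam : 0 < lam)
    (M : ℝ → Matrix (Fin d) (Fin d) ℝ) (hM : Continuous M)
    (hMpsd : ∀ s, (M s).PosSemidef)
    (t₀ : ℝ) (A₀ : Matrix (Fin d) (Fin d) ℝ) (hA₀ : A₀.PosDef) :
    ∀ t, t₀ ≤ t →
      (Real.exp ((t₀ - t) / lam) • A₀ +
        ∫ s in t₀..t, (lam⁻¹ * Real.exp ((s - t) / lam)) • M s).PosDef := by
  intro t ht
  have hsmul : (Real.exp ((t₀ - t) / lam) • A₀).PosDef := by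
    rw [Matrix.posDef_iff_dotProduct_mulVec]
    constructor
    · rw [Matrix.IsHermitian, Matrix.conjTranspose_smul, star_trivial, hA₀.1]
    · intro x hx
      have := hA₀.dotProduct_mulVec_pos hx
      simp only [Matrix.smul_mulVec, dotProduct_smul, smul_eq_mul] at *
      positivity
  have hintpsd : (∫ s in t₀..t, (lam⁻¹ * Real.exp ((s - t) / lam)) • M s).PosSemidef := by
    apply integral_posSemidef _ ?_ ?_ ht
    · exact (continuous_const.mul (Real.continuous_exp.comp ((continuous_id.sub continuous_const).div_const _))).smul hM
    · intro s
      exact posSemidef_smul (hMpsd s) (by positivity)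
  exact hsmul.add_posSemidef hintpsd
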